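/- arXiv:1904.08638 — 4 statements merged into one kernel-verified Lean document; each statement's English description precedes it below -/
import Mathlib

section
/- Let V be a finite-dimensional real vector space, L ⊆ V a full lattice (the ℤ-span of an ℝ-basis of V), and C̄ ⊆ V a convex cone (closed under addition and multiplication by positive real scalars). Set K := convexHull ℝ (C̄ ∩ L \ {0}). Let φ : V → ℝ be a nonzero linear functional and c ∈ ℝ with φ(x) ≥ c for all x ∈ K, set F := {x ∈ K : φ(x) = c}, and suppose the ℝ-linear span of F is all of V (so F is a facet of K whose cone σ = ℝ_{≥0}F is of maximal dimension). Then every nonzero lattice point of convexHull ℝ ({0} ∪ F) lies in F. -/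
open Pointwise

/-- Let `L` be a full lattice in a finite-dimensional real vector space `V`,
`C` a convex cone, `K` the convex hull of the nonzero lattice points of `C`,
and `F = {x ∈ K | φ x = c}` a facet of `K` cut out by a nonzero supporting
functional `φ`, whose linear span is all of `V`.  Then every nonzero lattice
point of `convexHull ℝ ({0} ∪ F)` lies in `F`. -/
theorem lattice_points_of_facet_polytope
    {V : Type*} [AddCommGroup V] [Module ℝ V] [FiniteDimensional ℝ V]
    (L : Set V)
    (hL : ∃ (ι : Type) (b : Module.Basis ι ℝ V),
      ∀ x : V, x ∈ L ↔ x ∈ Submodule.span ℤ (Set.range ⇑b))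
    (C : Set V)
    (hCadd : ∀ x ∈ C, ∀ y ∈ C, x + y ∈ C)
    (hCsmul : ∀ t : ℝ, 0 < t → ∀ x ∈ C, t • x ∈ C)
    (K : Set V) (hK : K = convexHull ℝ ((C ∩ L) \ {0}))
    (φ : V →ₗ[ℝ] ℝ) (hφ : φ ≠ 0) (c : ℝ) (hlb : ∀ x ∈ K, c ≤ φ x)
    (F : Set V) (hF : F = {x ∈ K | φ x = c})
    (hspan : Submodule.span ℝ F = ⊤) :
    ∀ v : V, v ∈ L → v ∈ convexHull ℝ ({0} ∪ F) → v ≠ 0 → v ∈ F := by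
  obtain ⟨ι, b, hLmem⟩ := hL
  -- C is convex
  have hCconv : Convex ℝ C := by
    intro x hx y hy a t ha ht hab
    rcases ha.eq_or_lt with rfl | ha'
    · simpa [show t = 1 by linarith] using hy
    rcases ht.eq_or_lt with rfl | ht'
    · simpa [show a = 1 by linarith] using hx
    exact hCadd _ (hCsmul a ha' x hx) _ (hCsmul t ht' y hy)
  have hKconv : Convex ℝ K := hK ▸ convex_convexHull ℝ _
  have hKC : K ⊆ C := by
    rw [hK]
    exact convexHull_min (fun p hp => hp.1.1) hCconv
  -- doubling stays in the generating set
  have hSdouble : (2:ℝ) • ((C ∩ L) \ {0}) ⊆ (C ∩ L) \ {0} := by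
    rintro _ ⟨p, ⟨⟨hpC, hpL⟩, hp0⟩, rfl⟩
    have hp0' : p ≠ 0 := by simpa using hp0
    have h2 : (2:ℝ) • p = p + p := two_smul ℝ p
    refine ⟨⟨?_, ?_⟩, ?_⟩
    · show (2:ℝ) • p ∈ C
      rw [h2]; exact hCadd p hpC p hpC
    · show (2:ℝ) • p ∈ L
      rw [hLmem, h2]
      exact add_mem ((hLmem p).1 hpL) ((hLmem p).1 hpL)
    · show (2:ℝ) • p ∉ ({0} : Set V)
      simp only [Set.mem_singleton_iff, smul_eq_zero]
      push_neg
      exact ⟨by norm_num, hp0'⟩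
  have hDouble : ∀ x ∈ K, (2:ℝ) • x ∈ K := by
    intro x hx
    rw [hK] at hx ⊢
    have : (2:ℝ) • x ∈ (2:ℝ) • convexHull ℝ ((C ∩ L) \ {0}) :=
      Set.smul_mem_smul_set hx
    rw [← convexHull_smul] at this
    exact convexHull_mono hSdouble this
  -- F is convex
  have hFconv : Convex ℝ F := by
    rw [hF]
    have : {x ∈ K | φ x = c} = K ∩ {x | φ x = c} := rfl
    rw [this]
    exact hKconv.inter (convex_hyperplane φ.isLinear c)
  -- V is nontrivial
  obtain ⟨w, hw⟩ : ∃ w, φ w ≠ 0 := by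
    by_contra h
    push_neg at h
    exact hφ (by ext x; simpa using h x)
  have : Nontrivial V := nontrivial_of_ne w 0 (fun h => hw (by simp [h]))
  -- F is nonempty
  have hFne : F.Nonempty := by
    rcases Set.eq_empty_or_nonempty F with hFe | hFn
    · exfalso
      rw [hFe, Submodule.span_empty] at hspan
      exact absurd hspan bot_ne_top
    · exact hFn
  -- c ≠ 0
  have hc0 : c ≠ 0 := by
    intro hc
    apply hφ
    rw [← LinearMap.ker_eq_top, ← top_le_iff, ← hspan]
    refine Submodule.span_le.mpr ?_
    intro x hx
    rw [hF] at hx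
    simpa [LinearMap.mem_ker, hc] using hx.2
  -- c > 0
  have hcpos : 0 < c := by
    obtain ⟨x, hx⟩ := hFne
    rw [hF] at hx
    have h1 := hlb _ (hDouble x hx.1)
    rw [map_smul, smul_eq_mul, hx.2] at h1
    rcases hc0.lt_or_gt with h | h
    · linarith
    · exact h
  -- main argument
  intro v hvL hvHull hv0
  rw [Set.singleton_union, convexHull_insert hFne] at hvHull
  rw [mem_convexJoin] at hvHull
  obtain ⟨x0, hx0, z, hz, hvseg⟩ := hvHull
  rw [Set.mem_singleton_iff] at hx0
  subst hx0
  rw [hFconv.convexHull_eq] at hz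
  obtain ⟨a, t, ha, ht, hat, hv⟩ := hvseg
  rw [smul_zero, zero_add] at hv
  have hzK : z ∈ K := by rw [hF] at hz; exact hz.1
  have hzc : φ z = c := by rw [hF] at hz; exact hz.2
  have ht1 : t ≤ 1 := by linarith
  have htpos : 0 < t := by
    rcases ht.eq_or_lt with rfl | h
    · exact absurd (by rw [← hv, zero_smul]) hv0
    · exact h
  have hvC : v ∈ C := by rw [← hv]; exact hCsmul t htpos z (hKC hzK)
  have hvK : v ∈ K := by
    rw [hK]
    exact subset_convexHull ℝ _ ⟨⟨hvC, hvL⟩, by simpa using hv0⟩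
  have hφv : φ v = t * c := by rw [← hv, map_smul, smul_eq_mul, hzc]
  have hle := hlb v hvK
  rw [hφv] at hle
  have : t = 1 := by nlinarith
  rw [← hv, this, one_smul]
  exact hz
end

section
/- Let V be a finite-dimensional real vector space, L ⊆ V a full lattice (the ℤ-span of an ℝ-basis of V), and C ⊆ V an open set closed under multiplication by positive real scalars. Then for every x ∈ C there exists a positive integer n such that n • x belongs to convexHull ℝ (C ∩ L). -/
/-- Let `L` be a full lattice in a finite-dimensional real vector space `V` and
`C` an open cone (an open set closed under multiplication by positive reals).
Then for every `x ∈ C` some positive integer multiple `n • x` lies in the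
convex hull of the lattice points of `C`. -/
theorem multiple_mem_convexHull_lattice_points_of_open_cone
    {V : Type*} [NormedAddCommGroup V] [NormedSpace ℝ V] [FiniteDimensional ℝ V]
    (L : Set V)
    (hL : ∃ (ι : Type) (b : Module.Basis ι ℝ V),
      ∀ x : V, x ∈ L ↔ x ∈ Submodule.span ℤ (Set.range ⇑b))
    (C : Set V) (hCopen : IsOpen C)
    (hCsmul : ∀ t : ℝ, 0 < t → ∀ x ∈ C, t • x ∈ C) :
    ∀ x ∈ C, ∃ n : ℕ, 0 < n ∧ (n : ℝ) • x ∈ convexHull ℝ (C ∩ L) := by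
  classical
  obtain ⟨ι, b, hLmem⟩ := hL
  haveI : Fintype ι := FiniteDimensional.fintypeBasisIndex b
  intro x hx
  obtain ⟨ε, hε, hball⟩ := Metric.isOpen_iff.mp hCopen x hx
  set e := b.equivFun with he
  set f := LinearMap.toContinuousLinearMap (e.symm.toLinearMap) with hf
  set M := ‖f‖ with hM
  set n : ℕ := ⌈M / ε⌉₊ + 1 with hn
  have hn0 : 0 < n := Nat.succ_pos _
  have hnR : (0 : ℝ) < n := by exact_mod_cast hn0
  have hnM : M < n * ε := by
    have h1 : M / ε ≤ (⌈M / ε⌉₊ : ℝ) := Nat.le_ceil _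
    have h2 : (⌈M / ε⌉₊ : ℝ) < n := by
      rw [hn]; push_cast; linarith
    have : M / ε < n := lt_of_le_of_lt h1 h2
    calc M = (M / ε) * ε := by field_simp
    _ < n * ε := by apply mul_lt_mul_of_pos_right this hε
  refine ⟨n, hn0, ?_⟩
  set c' : ι → ℝ := e ((n : ℝ) • x) with hc'
  set S : Set (ι → ℝ) :=
    Set.univ.pi fun i => ({(⌊c' i⌋ : ℝ), (⌈c' i⌉ : ℝ)} : Set ℝ) with hS
  -- c' lies in the convex hull of the vertex set S
  have hc'mem : c' ∈ convexHull ℝ S := by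
    apply mem_convexHull_pi
    intro i _
    rw [convexHull_pair, segment_eq_Icc (by exact_mod_cast Int.floor_le_ceil (c' i))]
    exact ⟨Int.floor_le _, Int.le_ceil _⟩
  -- so n • x lies in the convex hull of e.symm '' S
  have hmem : (n : ℝ) • x ∈ convexHull ℝ (⇑e.symm '' S) := by
    have himg := e.symm.toLinearMap.image_convexHull S
    simp only [LinearEquiv.coe_coe] at himg
    rw [← himg]
    exact ⟨c', hc'mem, e.symm_apply_apply _⟩
  -- every vertex is in C ∩ L
  refine convexHull_mono ?_ hmem
  rintro y ⟨v, hv, rfl⟩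
  rw [Set.mem_pi] at hv
  -- each coordinate of v is an integer within distance 1 of c'
  have hint : ∀ i, ∃ m : ℤ, v i = (m : ℝ) ∧ |v i - c' i| ≤ 1 := by
    intro i
    rcases hv i (Set.mem_univ i) with h | h
    · refine ⟨⌊c' i⌋, h, ?_⟩
      rw [h, abs_sub_le_iff]
      constructor
      · linarith [Int.floor_le (c' i)]
      · linarith [Int.sub_one_lt_floor (c' i)]
    · refine ⟨⌈c' i⌉, h, ?_⟩
      rw [h, abs_sub_le_iff]
      constructor
      · linarith [Int.ceil_lt_add_one (c' i)]
      · linarith [Int.le_ceil (c' i)]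
  constructor
  · -- membership in C
    have hnorm1 : ‖v - c'‖ ≤ 1 := by
      rw [pi_norm_le_iff_of_nonneg zero_le_one]
      intro i
      obtain ⟨m, -, hm2⟩ := hint i
      simpa [Real.norm_eq_abs] using hm2
    have hdist : ‖e.symm v - (n : ℝ) • x‖ ≤ M := by
      have : e.symm v - (n : ℝ) • x = f (v - c') := by
        simp [hf, hc', map_sub]
      rw [this]
      calc ‖f (v - c')‖ ≤ M * ‖v - c'‖ := f.le_opNorm _
        _ ≤ M * 1 := mul_le_mul_of_nonneg_left hnorm1 (norm_nonneg _)
        _ = M := mul_one _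
    have hball' : (n : ℝ)⁻¹ • e.symm v ∈ Metric.ball x ε := by
      rw [Metric.mem_ball, dist_eq_norm]
      have : (n : ℝ)⁻¹ • e.symm v - x
          = (n : ℝ)⁻¹ • (e.symm v - (n : ℝ) • x) := by
        rw [smul_sub, smul_smul, inv_mul_cancel₀ hnR.ne', one_smul]
      rw [this, norm_smul, Real.norm_eq_abs, abs_inv, abs_of_pos hnR]
      calc (n : ℝ)⁻¹ * ‖e.symm v - (n : ℝ) • x‖
          ≤ (n : ℝ)⁻¹ * M := mul_le_mul_of_nonneg_left hdist (by positivity)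
        _ < (n : ℝ)⁻¹ * ((n : ℝ) * ε) := by
            exact mul_lt_mul_of_pos_left hnM (by positivity)
        _ = ε := by field_simp
    have := hCsmul (n : ℝ) hnR _ (hball hball')
    rwa [smul_smul, mul_inv_cancel₀ hnR.ne', one_smul] at this
  · -- membership in L
    rw [hLmem]
    choose m hm _ using hint
    have : e.symm v = ∑ i, (m i : ℝ) • b i := by
      rw [he, Module.Basis.equivFun_symm_apply]
      exact Finset.sum_congr rfl fun i _ => by rw [hm i]
    rw [this]
    apply Submodule.sum_mem
    intro i _
    rw [Int.cast_smul_eq_zsmul]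
    exact Submodule.smul_mem _ (m i) (Submodule.subset_span ⟨i, rfl⟩)
end

section
/- Let N be a free ℤ-module of finite rank, v ∈ N a nonzero primitive element (i.e. the submodule ℤv is saturated in N: k·x ∈ ℤv for x ∈ N and a positive integer k implies x ∈ ℤv), and g an automorphism of N of finite order such that g(v) = m·v for some nonnegative integer m and such that m' ∘ g = m' for every ℤ-linear functional m' : N → ℤ vanishing on v. Then g = id. -/
/-- Let `N` be a free `ℤ`-module of finite rank, `v ∈ N` a nonzero primitive
element, and `g` a finite-order automorphism of `N` sending `v` to a
nonnegative multiple of itself and fixing every linear functional vanishing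
on `v`.  Then `g = 1`. -/
theorem aut_fixing_ray_and_its_annihilator_eq_one
    {N : Type*} [AddCommGroup N] [Module.Free ℤ N] [Module.Finite ℤ N]
    (v : N) (hv0 : v ≠ 0)
    (hprim : ∀ (x : N) (k : ℕ), 0 < k → k • x ∈ Submodule.span ℤ {v} →
      x ∈ Submodule.span ℤ {v})
    (g : N ≃ₗ[ℤ] N) (n : ℕ) (hn : 0 < n) (hfin : g ^ n = 1)
    (m : ℕ) (hgv : g v = m • v)
    (hfix : ∀ m' : N →ₗ[ℤ] ℤ, m' v = 0 → m' ∘ₗ (g : N →ₗ[ℤ] N) = m') :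
    g = 1 := by
  -- Step 1: m = 1, so g v = v
  have hpow : ∀ k : ℕ, (g ^ k) v = (m ^ k) • v := by
    intro k
    induction k with
    | zero => simp
    | succ k ih =>
      rw [pow_succ, show (g ^ k * g) v = (g ^ k) (g v) from rfl, hgv, map_nsmul, ih,
        smul_smul, mul_comm, pow_succ]
  have hmn : (m ^ n) • v = v := by
    have := hpow n
    rw [hfin] at this
    simpa using this.symm
  have hm1 : m = 1 := by
    have hsub : ((m ^ n : ℤ) - 1) • v = 0 := by
      rw [sub_smul, one_smul, sub_eq_zero]
      exact_mod_cast hmn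
    have : (m ^ n : ℤ) - 1 = 0 := by
      rcases smul_eq_zero.mp hsub with h | h
      · exact h
      · exact absurd h hv0
    have hmn1 : m ^ n = 1 := by exact_mod_cast sub_eq_zero.mp this
    exact (pow_eq_one_iff.mp hmn1).resolve_right hn.ne'
  have hgvv : g v = v := by rw [hgv, hm1, one_smul]
  have hpowv : ∀ k : ℕ, (g ^ k) v = v := by
    intro k; rw [hpow k, hm1, one_pow, one_smul]
  -- Step 2: any z killed by all functionals vanishing on v lies in span {v}
  have hsep : ∀ z : N, (∀ m' : N →ₗ[ℤ] ℤ, m' v = 0 → m' z = 0) →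
      z ∈ Submodule.span ℤ {v} := by
    intro z hz
    set S := Submodule.span ℤ {v} with hS
    by_contra hzS
    -- the quotient is torsion-free
    haveI : NoZeroSMulDivisors ℤ (N ⧸ S) := by
      refine ⟨fun {c q} hcq => ?_⟩
      by_cases hc : c = 0
      · exact Or.inl hc
      · right
        obtain ⟨x, rfl⟩ := Submodule.Quotient.mk_surjective S q
        have hx : c • x ∈ S := by
          rwa [← Submodule.Quotient.mk_smul, Submodule.Quotient.mk_eq_zero] at hcq
        have hnat : (c.natAbs : ℤ) • x ∈ S := by
          rcases Int.natAbs_eq c with h | h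
          · rwa [← h]
          · rw [← neg_neg ((c.natAbs : ℤ)), ← h, neg_smul]
            exact S.neg_mem hx
        have : x ∈ S := hprim x c.natAbs (Int.natAbs_pos.mpr hc)
          (by rwa [← natCast_zsmul])
        rwa [Submodule.Quotient.mk_eq_zero]
    haveI : Module.Free ℤ (N ⧸ S) := Module.free_of_finite_type_torsion_free'
    -- choose a basis of the quotient; some coordinate is nonzero on z
    let b := Module.Free.chooseBasis ℤ (N ⧸ S)
    have hq : (Submodule.Quotient.mk z : N ⧸ S) ≠ 0 := by
      rwa [Ne, Submodule.Quotient.mk_eq_zero]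
    have : ∃ i, b.coord i (Submodule.Quotient.mk z) ≠ 0 := by
      by_contra h
      push_neg at h
      apply hq
      exact b.forall_coord_eq_zero_iff.mp h
    obtain ⟨i, hi⟩ := this
    have hv' : (b.coord i ∘ₗ S.mkQ) v = 0 := by
      simp [Submodule.mkQ_apply, show (Submodule.Quotient.mk v : N ⧸ S) = 0 from
        (Submodule.Quotient.mk_eq_zero S).mpr (Submodule.mem_span_singleton_self v)]
    exact hi (hz (b.coord i ∘ₗ S.mkQ) hv')
  -- Step 3: for any x, g x - x = c • v, iterate to get c = 0
  ext x
  have hzx : g x - x ∈ Submodule.span ℤ {v} := by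
    apply hsep
    intro m' hm'
    have := congrArg (fun f : N →ₗ[ℤ] ℤ => f x) (hfix m' hm')
    simp only [LinearMap.comp_apply, LinearEquiv.coe_coe] at this
    rw [map_sub, this, sub_self]
  obtain ⟨c, hc⟩ := Submodule.mem_span_singleton.mp hzx
  have hgx : g x = x + c • v := by rw [hc]; abel
  have hiter : ∀ k : ℕ, (g ^ k) x = x + ((k : ℤ) * c) • v := by
    intro k
    induction k with
    | zero => simp
    | succ k ih =>
      rw [pow_succ, show (g ^ k * g) x = (g ^ k) (g x) from rfl, hgx, map_add, ih,
        map_smul, hpowv k]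
      push_cast
      rw [add_mul, one_mul, add_smul]
      abel
  have hx : x = x + ((n : ℤ) * c) • v := by
    have := hiter n
    rw [hfin] at this; simpa using this
  have hcv : ((n : ℤ) * c) • v = 0 := by
    exact (left_eq_add.mp hx)
  have hc0 : c = 0 := by
    rcases smul_eq_zero.mp hcv with h | h
    · rcases mul_eq_zero.mp h with h | h
      · exact absurd (by exact_mod_cast h) hn.ne'
      · exact h
    · exact absurd h hv0
  simp [hgx, hc0]
end

section
/- Let L be a free ℤ-module of finite rank equipped with a symmetric ℤ-bilinear form B, and let r be a ℤ-linear automorphism of L preserving B (i.e. B(r x, r y) = B(x, y) for all x, y) with r² = id, whose fixed submodule H := {x ∈ L : r(x) = x} satisfies that L/H has rank at most 1. Let e ∈ L be an isotropic element (B(e, e) = 0) with r(e) = e or r(e) = −e, and set e^⊥ := {x ∈ L : B(x, e) = 0}. Then: r maps e^⊥ to itself and maps ℤe to itself, hence induces an automorphism r̄ of the quotient module e^⊥/ℤe; r̄² = id; r̄ fixes pointwise the image of H ∩ e^⊥ in e^⊥/ℤe; and the quotient of e^⊥/ℤe by this image has rank at most 1. -/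
/-- A reflection `r` of an even lattice `(L, B)` fixing an isotropic vector `e`
up to sign induces a reflection `r̄` on the quotient lattice `e^⊥ / ℤe`:
`r` preserves `e^⊥` and `ℤe`, the induced map `r̄` has order at most `2`, it
fixes pointwise the image of `H ∩ e^⊥` (where `H` is the fixed lattice of `r`,
of corank at most `1`), and the quotient of `e^⊥ / ℤe` by this image has rank
at most `1`. -/
theorem reflection_induces_reflection_on_isotropic_quotient
    {L : Type*} [AddCommGroup L] [Module.Free ℤ L] [Module.Finite ℤ L]
    (B : L →ₗ[ℤ] L →ₗ[ℤ] ℤ) (hBsymm : ∀ x y : L, B x y = B y x)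
    (r : L ≃ₗ[ℤ] L) (hrB : ∀ x y : L, B (r x) (r y) = B x y)
    (hr2 : ∀ x : L, r (r x) = x)
    (H : Submodule ℤ L) (hH : ∀ x : L, x ∈ H ↔ r x = x)
    (hHrank : Module.rank ℤ (L ⧸ H) ≤ 1)
    (e : L) (he : B e e = 0) (hre : r e = e ∨ r e = -e)
    (P : Submodule ℤ L) (hP : ∀ x : L, x ∈ P ↔ B x e = 0)
    (Z : Submodule ℤ P) (hZ : Z = (Submodule.span ℤ {e}).comap P.subtype) :
    (∀ x ∈ P, r x ∈ P) ∧
    (∀ x ∈ Submodule.span ℤ {e}, r x ∈ Submodule.span ℤ {e}) ∧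
    ∃ rbar : (P ⧸ Z) ≃ₗ[ℤ] (P ⧸ Z),
      (∀ (x : L) (hx : x ∈ P) (hrx : r x ∈ P),
        rbar (Submodule.Quotient.mk ⟨x, hx⟩) = Submodule.Quotient.mk ⟨r x, hrx⟩) ∧
      (∀ q : P ⧸ Z, rbar (rbar q) = q) ∧
      (∀ (x : L) (hx : x ∈ P), x ∈ H →
        rbar (Submodule.Quotient.mk ⟨x, hx⟩) = Submodule.Quotient.mk ⟨x, hx⟩) ∧
      Module.rank ℤ ((P ⧸ Z) ⧸ Submodule.map Z.mkQ (H.comap P.subtype)) ≤ 1 := by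
  -- r preserves P
  have hrP : ∀ x ∈ P, r x ∈ P := by
    intro x hx
    rw [hP] at hx ⊢
    rcases hre with h | h
    · rw [← h, hrB x e]; exact hx
    · have : B (r x) (r e) = B x e := hrB x e
      rw [h, map_neg] at this
      omega
  -- r preserves span {e}
  have hrS : ∀ x ∈ Submodule.span ℤ {e}, r x ∈ Submodule.span ℤ {e} := by
    intro x hx
    rw [Submodule.mem_span_singleton] at hx ⊢
    obtain ⟨c, rfl⟩ := hx
    rcases hre with h | h
    · exact ⟨c, by rw [map_smul, h]⟩
    · exact ⟨-c, by rw [map_smul, h, smul_neg, neg_smul]⟩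
  refine ⟨hrP, hrS, ?_⟩
  -- the restriction of r to P
  have heP : e ∈ P := (hP e).2 he
  set rP : P →ₗ[ℤ] P :=
    (r.toLinearMap ∘ₗ P.subtype).codRestrict P (fun x => hrP x x.2) with hrPdef
  have hrPval : ∀ x : P, (rP x : L) = r x := fun x => rfl
  have hker : Z ≤ LinearMap.ker (Z.mkQ ∘ₗ rP) := by
    intro z hz
    have hzS : (z : L) ∈ Submodule.span ℤ {e} := by
      rw [hZ] at hz; exact hz
    have : rP z ∈ Z := by
      rw [hZ, Submodule.mem_comap]
      exact hrS _ hzS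
    simpa [LinearMap.mem_ker, Submodule.Quotient.mk_eq_zero] using this
  set rbar0 : (P ⧸ Z) →ₗ[ℤ] (P ⧸ Z) := Z.liftQ (Z.mkQ ∘ₗ rP) hker with hrbar0def
  have hrbar0mk : ∀ x : P, rbar0 (Submodule.Quotient.mk x) = Submodule.Quotient.mk (rP x) := by
    intro x; rfl
  have hinv : ∀ q : P ⧸ Z, rbar0 (rbar0 q) = q := by
    intro q
    obtain ⟨x, rfl⟩ := Submodule.Quotient.mk_surjective Z q
    rw [hrbar0mk, hrbar0mk]
    congr 1
    ext
    exact hr2 x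
  have hcomp : rbar0 ∘ₗ rbar0 = LinearMap.id := LinearMap.ext hinv
  set rbar : (P ⧸ Z) ≃ₗ[ℤ] (P ⧸ Z) := LinearEquiv.ofLinear rbar0 rbar0 hcomp hcomp with hrbardef
  have hrbarmk : ∀ (x : L) (hx : x ∈ P) (hrx : r x ∈ P),
      rbar (Submodule.Quotient.mk ⟨x, hx⟩) = Submodule.Quotient.mk ⟨r x, hrx⟩ := by
    intro x hx hrx
    show rbar0 (Submodule.Quotient.mk ⟨x, hx⟩) = _
    rw [hrbar0mk]
    congr 1
  refine ⟨rbar, hrbarmk, hinv, ?_, ?_⟩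
  · intro x hx hxH
    rw [hrbarmk x hx (hrP x hx)]
    congr 1
    ext
    exact (hH x).1 hxH
  · -- rank bound: embed into (L⧸H)⧸span{[e]}
    set Q1 : Submodule ℤ (L ⧸ H) := Submodule.span ℤ {H.mkQ e} with hQ1def
    set f0 : P →ₗ[ℤ] (L ⧸ H) ⧸ Q1 := Q1.mkQ ∘ₗ H.mkQ ∘ₗ P.subtype with hf0def
    have hf0Z : Z ≤ LinearMap.ker f0 := by
      intro z hz
      rw [hZ, Submodule.mem_comap, Submodule.mem_span_singleton] at hz
      obtain ⟨c, hc⟩ := hz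
      have : f0 z = c • Q1.mkQ (H.mkQ e) := by
        simp only [hf0def, LinearMap.comp_apply, Submodule.subtype_apply, ← hc, map_smul]
      have h0 : Q1.mkQ (H.mkQ e) = 0 := by
        rw [Submodule.mkQ_apply, Submodule.Quotient.mk_eq_zero]
        exact Submodule.mem_span_singleton_self _
      rw [LinearMap.mem_ker, this, h0, smul_zero]
    set f1 : (P ⧸ Z) →ₗ[ℤ] (L ⧸ H) ⧸ Q1 := Z.liftQ f0 hf0Z with hf1def
    have hf1ker : Submodule.map Z.mkQ (H.comap P.subtype) ≤ LinearMap.ker f1 := by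
      rintro q hq
      obtain ⟨x, hxH, rfl⟩ := hq
      have : f1 (Z.mkQ x) = f0 x := rfl
      rw [LinearMap.mem_ker, this]
      simp only [hf0def, LinearMap.comp_apply, Submodule.subtype_apply]
      have hx0 : H.mkQ (x : L) = 0 := by
        rw [Submodule.mkQ_apply, Submodule.Quotient.mk_eq_zero]; exact hxH
      rw [hx0, map_zero]
    set f2 := (Submodule.map Z.mkQ (H.comap P.subtype)).liftQ f1 hf1ker with hf2def
    have hf2inj : Function.Injective f2 := by
      rw [← LinearMap.ker_eq_bot, LinearMap.ker_eq_bot']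
      intro q hq
      obtain ⟨p, rfl⟩ := Submodule.Quotient.mk_surjective _ q
      obtain ⟨x, rfl⟩ := Submodule.Quotient.mk_surjective Z p
      have hx0 : f0 x = 0 := hq
      rw [hf0def, LinearMap.comp_apply, LinearMap.comp_apply, Submodule.mkQ_apply,
        Submodule.Quotient.mk_eq_zero, Submodule.mem_span_singleton] at hx0
      obtain ⟨c, hc⟩ := hx0
      have hce : H.mkQ ((x : L) - c • e) = 0 := by
        have hc' : H.mkQ ((x : L)) = c • H.mkQ e := hc.symm
        rw [map_sub, map_smul, hc', sub_self]
      have hxH : (x : L) - c • e ∈ H := (Submodule.Quotient.mk_eq_zero H).1 hce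
      have hceP : c • e ∈ P := Submodule.smul_mem _ _ heP
      have hsplit : x = (⟨(x : L) - c • e, by
          have := x.2
          have : (x : L) - c • e ∈ P := Submodule.sub_mem _ x.2 hceP
          exact this⟩ : P) + ⟨c • e, hceP⟩ := by
        ext; simp
      rw [show (Submodule.Quotient.mk (Submodule.Quotient.mk x : P ⧸ Z) :
        (P ⧸ Z) ⧸ Submodule.map Z.mkQ (H.comap P.subtype)) =
        (Submodule.map Z.mkQ (H.comap P.subtype)).mkQ (Z.mkQ x) from rfl,
        Submodule.mkQ_apply, Submodule.Quotient.mk_eq_zero]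
      have h1 : Z.mkQ x = Z.mkQ ⟨(x : L) - c • e, Submodule.sub_mem _ x.2 hceP⟩ := by
        rw [← sub_eq_zero, ← map_sub, Submodule.mkQ_apply, Submodule.Quotient.mk_eq_zero, hZ,
          Submodule.mem_comap]
        show ((x : L) - ((x : L) - c • e)) ∈ _
        rw [sub_sub_cancel]
        exact Submodule.smul_mem _ _ (Submodule.mem_span_singleton_self e)
      rw [h1]
      exact Submodule.mem_map_of_mem hxH
    calc Module.rank ℤ ((P ⧸ Z) ⧸ Submodule.map Z.mkQ (H.comap P.subtype))
        ≤ Module.rank ℤ ((L ⧸ H) ⧸ Q1) := f2.rank_le_of_injective hf2inj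
      _ ≤ Module.rank ℤ (L ⧸ H) := rank_quotient_le Q1
      _ ≤ 1 := hHrank
end
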